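/- fN(Fin) ⊆ fS(Fin), and both fN(Fin) and fS(Fin) are σ-ideals on ω^ω, i.e., each is closed under taking subsets and countable unions. -/

import Mathlib

open Filter Set

/-- The basic clopen set `[σ]` in the Baire space determined by a finite sequence `σ`. -/
def cylinder (σ : List ℕ) : Set (ℕ → ℕ) :=
  {x | ∀ i : Fin σ.length, x i = σ.get i}

/-- `limsup_n h(n) = ∞`, i.e. `h` takes arbitrarily large values frequently. -/
def LimsupInfty (h : ℕ → ℕ) : Prop :=
  ∀ m : ℕ, ∃ᶠ n in Filter.atTop, m ≤ h n

/-- The family `fN(h)` of fake null sets: `F ∈ fN(h)` iff for every `ε > 0` there is a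
sequence of finite sequences `σ_n` with `∑ 1/h(|σ_n|) < ε` covering `F`. -/
def fN (h : ℕ → ℕ) (F : Set (ℕ → ℕ)) : Prop :=
  ∀ ε : ℝ, 0 < ε →
    ∃ σ : ℕ → List ℕ,
      Summable (fun n => (1 : ℝ) / (h (σ n).length : ℝ)) ∧
      (∑' n, (1 : ℝ) / (h (σ n).length : ℝ)) < ε ∧
      F ⊆ ⋃ n, cylinder (σ n)

/-- The restriction of `x` to the interval `[l, u)`, extended by `0` elsewhere. -/
def restrIco (x : ℕ → ℕ) (l u : ℕ) : ℕ → ℕ :=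
  fun i => if l ≤ i ∧ i < u then x i else 0

/-- `J` is a set of patterns on the interval `[l, u)`: every element vanishes off `[l, u)`. -/
def SuppIco (l u : ℕ) (J : Set (ℕ → ℕ)) : Prop :=
  ∀ σ ∈ J, ∀ i, ¬ (l ≤ i ∧ i < u) → σ i = 0

/-- The family `fE(h)`: partition `ℕ` into consecutive nonempty intervals `I_n = [a n, a (n+1))`
(`a 0 = 0`, `a` strictly increasing), patterns `J_n ⊆ ω^{I_n}` with `∑ |J_n|/h(|I_n|) < ∞`,
and `F ⊆ {x : x↾I_n ∈ J_n for all but finitely many n}`. -/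
def fE (h : ℕ → ℕ) (F : Set (ℕ → ℕ)) : Prop :=
  ∃ a : ℕ → ℕ, a 0 = 0 ∧ StrictMono a ∧
    ∃ J : ℕ → Set (ℕ → ℕ),
      (∀ n, SuppIco (a n) (a (n+1)) (J n)) ∧
      (∀ n, (J n).Finite) ∧
      Summable (fun n => ((J n).ncard : ℝ) / (h (a (n+1) - a n) : ℝ)) ∧
      F ⊆ {x | ∀ᶠ n in Filter.atTop, restrIco x (a n) (a (n+1)) ∈ J n}

/-- The family `fS(h)` of fake small sets: as `fE(h)` but with
`x↾I_n ∈ J_n` for infinitely many `n`. -/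
def fS (h : ℕ → ℕ) (F : Set (ℕ → ℕ)) : Prop :=
  ∃ a : ℕ → ℕ, a 0 = 0 ∧ StrictMono a ∧
    ∃ J : ℕ → Set (ℕ → ℕ),
      (∀ n, SuppIco (a n) (a (n+1)) (J n)) ∧
      (∀ n, (J n).Finite) ∧
      Summable (fun n => ((J n).ncard : ℝ) / (h (a (n+1) - a n) : ℝ)) ∧
      F ⊆ {x | ∃ᶠ n in Filter.atTop, restrIco x (a n) (a (n+1)) ∈ J n}

/-- The family `fE(Fin)`: as `fE(h)` but one only requires each pattern set `J_n` to be finite. -/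
def fEFin (F : Set (ℕ → ℕ)) : Prop :=
  ∃ a : ℕ → ℕ, a 0 = 0 ∧ StrictMono a ∧
    ∃ J : ℕ → Set (ℕ → ℕ),
      (∀ n, SuppIco (a n) (a (n+1)) (J n)) ∧
      (∀ n, (J n).Finite) ∧
      F ⊆ {x | ∀ᶠ n in Filter.atTop, restrIco x (a n) (a (n+1)) ∈ J n}

/-- The family `fS(Fin)`: as `fS(h)` but one only requires each pattern set `J_n` to be finite. -/
def fSFin (F : Set (ℕ → ℕ)) : Prop :=
  ∃ a : ℕ → ℕ, a 0 = 0 ∧ StrictMono a ∧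
    ∃ J : ℕ → Set (ℕ → ℕ),
      (∀ n, SuppIco (a n) (a (n+1)) (J n)) ∧
      (∀ n, (J n).Finite) ∧
      F ⊆ {x | ∃ᶠ n in Filter.atTop, restrIco x (a n) (a (n+1)) ∈ J n}

/-- The family `fN(Fin)`: there are finite `S_n ⊆ ω^n` with
`F ⊆ {x : x↾n ∈ S_n for infinitely many n}`. -/
def fNFin (F : Set (ℕ → ℕ)) : Prop :=
  ∃ S : (n : ℕ) → Set (Fin n → ℕ),
    (∀ n, (S n).Finite) ∧
    F ⊆ {x | ∃ᶠ n in Filter.atTop, (fun i : Fin n => x i) ∈ S n}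

/-- The σ-ideal `M_-`: there are `x_F ∈ ω^ω` and a partition of `ℕ` into consecutive nonempty
intervals `I_n = [a n, a (n+1))` with `F ⊆ {x : x↾I_n ≠ x_F↾I_n for all but finitely many n}`. -/
def Mminus (F : Set (ℕ → ℕ)) : Prop :=
  ∃ xF : ℕ → ℕ, ∃ a : ℕ → ℕ, a 0 = 0 ∧ StrictMono a ∧
    F ⊆ {x | ∀ᶠ n in Filter.atTop, ∃ i, a n ≤ i ∧ i < a (n+1) ∧ x i ≠ xF i}

def eFun (n v : ℕ) : ℕ → ℕ := fun i => if n ≤ i ∧ i < n + 1 then v else 0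

lemma restrIco_single (x : ℕ → ℕ) (n : ℕ) : restrIco x n (n + 1) = eFun n (x n) := by
  funext i
  simp only [restrIco, eFun]
  by_cases h : n ≤ i ∧ i < n + 1
  · have : i = n := le_antisymm (Nat.lt_succ_iff.mp h.2) h.1
    simp [h, this]
  · rw [if_neg h, if_neg h]

/-- Singleton-interval normal form of `fSFin`. -/
def fSVal (F : Set (ℕ → ℕ)) : Prop :=
  ∃ V : ℕ → Set ℕ, (∀ n, (V n).Finite) ∧ F ⊆ {x | ∃ᶠ n in Filter.atTop, x n ∈ V n}

lemma fSVal_fSFin {F : Set (ℕ → ℕ)} (h : fSVal F) : fSFin F := by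
  obtain ⟨V, hfin, hsub⟩ := h
  refine ⟨id, rfl, strictMono_id, fun n => eFun n '' V n, ?_, fun n => (hfin n).image _, ?_⟩
  · intro n σ hσ i hi
    obtain ⟨v, _, rfl⟩ := hσ
    simp only [eFun]
    rw [if_neg]
    exact hi
  · intro x hx
    refine (hsub hx).mono fun n hn => ?_
    show restrIco x (id n) (id (n + 1)) ∈ _
    simp only [id]
    rw [restrIco_single]
    exact mem_image_of_mem _ hn

lemma fSFin_fSVal {F : Set (ℕ → ℕ)} (h : fSFin F) : fSVal F := by
  obtain ⟨a, _, hmono, J, _, hfin, hsub⟩ := h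
  refine ⟨fun i => ⋃ n ∈ Set.Iic i, (fun σ => σ i) '' J n,
    fun i => (Set.finite_Iic i).biUnion fun n _ => (hfin n).image _, ?_⟩
  intro x hx
  have hf := hsub hx
  simp only [Set.mem_setOf_eq] at hf ⊢
  rw [Filter.frequently_atTop] at hf ⊢
  intro N
  obtain ⟨n, hn, hmem⟩ := hf N
  refine ⟨a n, le_trans hn hmono.le_apply, ?_⟩
  refine Set.mem_biUnion (show n ∈ Set.Iic (a n) from hmono.le_apply) ?_
  refine ⟨restrIco x (a n) (a (n + 1)), hmem, ?_⟩
  simp [restrIco, (hmono (Nat.lt_succ_self n) : a n < a (n + 1))]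

lemma fNFin_fSVal {F : Set (ℕ → ℕ)} (h : fNFin F) : fSVal F := by
  obtain ⟨S, hfin, hsub⟩ := h
  refine ⟨fun m => (fun σ : Fin (m + 1) → ℕ => σ ⟨m, Nat.lt_succ_self m⟩) '' S (m + 1),
    fun m => (hfin _).image _, ?_⟩
  intro x hx
  have hf := hsub hx
  simp only [Set.mem_setOf_eq] at hf ⊢
  rw [Filter.frequently_atTop] at hf ⊢
  intro N
  obtain ⟨n, hn, hmem⟩ := hf (N + 1)
  obtain ⟨m, rfl⟩ : ∃ m, n = m + 1 := ⟨n - 1, by omega⟩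
  exact ⟨m, by omega, ⟨_, hmem, rfl⟩⟩

theorem stmt3 :
    (∀ F : Set (ℕ → ℕ), fNFin F → fSFin F) ∧
    (∀ A B : Set (ℕ → ℕ), A ⊆ B → fNFin B → fNFin A) ∧
    (∀ G : ℕ → Set (ℕ → ℕ), (∀ n, fNFin (G n)) → fNFin (⋃ n, G n)) ∧
    (∀ A B : Set (ℕ → ℕ), A ⊆ B → fSFin B → fSFin A) ∧
    (∀ G : ℕ → Set (ℕ → ℕ), (∀ n, fSFin (G n)) → fSFin (⋃ n, G n)) := by
  refine ⟨fun F h => fSVal_fSFin (fNFin_fSVal h), ?_, ?_, ?_, ?_⟩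
  · rintro A B hAB ⟨S, hfin, hsub⟩
    exact ⟨S, hfin, hAB.trans hsub⟩
  · intro G h
    choose S hfin hsub using h
    refine ⟨fun n => ⋃ k ∈ Set.Iic n, S k n,
      fun n => (Set.finite_Iic n).biUnion fun k _ => hfin k n, ?_⟩
    intro x hx
    obtain ⟨k, hk⟩ := mem_iUnion.mp hx
    have hf := hsub k hk
    simp only [Set.mem_setOf_eq] at hf ⊢
    rw [Filter.frequently_atTop] at hf ⊢
    intro N
    obtain ⟨n, hn, hmem⟩ := hf (max N k)
    exact ⟨n, le_trans (le_max_left _ _) hn,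
      Set.mem_biUnion (le_trans (le_max_right _ _) hn) hmem⟩
  · rintro A B hAB ⟨a, ha0, hmono, J, hs, hfin, hsub⟩
    exact ⟨a, ha0, hmono, J, hs, hfin, hAB.trans hsub⟩
  · intro G h
    refine fSVal_fSFin ?_
    have h' : ∀ k, fSVal (G k) := fun k => fSFin_fSVal (h k)
    choose V hfin hsub using h'
    refine ⟨fun n => ⋃ k ∈ Set.Iic n, V k n,
      fun n => (Set.finite_Iic n).biUnion fun k _ => hfin k n, ?_⟩
    intro x hx
    obtain ⟨k, hk⟩ := mem_iUnion.mp hx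
    have hf := hsub k hk
    simp only [Set.mem_setOf_eq] at hf ⊢
    rw [Filter.frequently_atTop] at hf ⊢
    intro N
    obtain ⟨n, hn, hmem⟩ := hf (max N k)
    exact ⟨n, le_trans (le_max_left _ _) hn,
      Set.mem_biUnion (le_trans (le_max_right _ _) hn) hmem⟩
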